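/- Suppose that (G₁,N₁) and (G₂,N₂) are equal order pairs of finite groups such that: every element of G₁ \ N₁ has order m₁, every element of G₂ \ N₂ has order m₂, the order of every element of N₂ divides m₁, and the order of every element of N₁ divides m₂. Then (G₁ × G₂, N₁ × N₂) is an equal order pair. -/
import Mathlib

/-- `(G, N)` is an *equal order pair* if `N` is a proper, nontrivial, normal subgroup of `G`
and for every `x ∈ G \ N` and every `n ∈ N`, the order of `x * n` equals the order of `x`. -/
def IsEqualOrderPair {G : Type*} [Group G] (N : Subgroup G) : Prop :=
  N.Normal ∧ N ≠ ⊥ ∧ N ≠ ⊤ ∧ ∀ x ∉ N, ∀ n ∈ N, orderOf (x * n) = orderOf x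

theorem stmt6 {G₁ G₂ : Type*} [Group G₁] [Group G₂] [Finite G₁] [Finite G₂]
    (N₁ : Subgroup G₁) (N₂ : Subgroup G₂)
    (h₁ : IsEqualOrderPair N₁) (h₂ : IsEqualOrderPair N₂) (m₁ m₂ : ℕ)
    (hm₁ : ∀ x ∉ N₁, orderOf x = m₁) (hm₂ : ∀ x ∉ N₂, orderOf x = m₂)
    (hexp₂ : ∀ n ∈ N₂, orderOf n ∣ m₁) (hexp₁ : ∀ n ∈ N₁, orderOf n ∣ m₂) :
    IsEqualOrderPair (N₁.prod N₂) := by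
  obtain ⟨hn₁, hbot₁, htop₁, heq₁⟩ := h₁
  obtain ⟨hn₂, hbot₂, htop₂, heq₂⟩ := h₂
  refine ⟨?_, ?_, ?_, ?_⟩
  · exact @Subgroup.prod_normal _ _ _ _ N₁ N₂ hn₁ hn₂
  · obtain ⟨⟨a, ha⟩, ha1⟩ := Subgroup.ne_bot_iff_exists_ne_one.mp hbot₁
    rw [Subgroup.ne_bot_iff_exists_ne_one]
    refine ⟨⟨(a, 1), Subgroup.mem_prod.2 ⟨ha, one_mem _⟩⟩, ?_⟩
    simp only [ne_eq, Subgroup.mk_eq_one, Prod.mk_eq_one]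
    exact fun h => ha1 (Subtype.ext h.1)
  · intro h
    obtain ⟨x, hx⟩ := not_forall.mp ((Subgroup.eq_top_iff' N₁).not.1 htop₁)
    exact hx ((Subgroup.mem_prod.1 ((Subgroup.eq_top_iff' _).1 h (x, 1))).1)
  · rintro ⟨x₁, x₂⟩ hx ⟨n₁, n₂⟩ hn
    obtain ⟨hn1, hn2⟩ := Subgroup.mem_prod.1 hn
    rw [Subgroup.mem_prod, not_and_or] at hx
    simp only at hn1 hn2 hx
    have key : ∀ (y₁ : G₁) (y₂ : G₂), (y₁ ∉ N₁ ∨ y₂ ∉ N₂) →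
        (y₁ ∉ N₁ ∧ y₂ ∉ N₂ ∧ orderOf ((y₁, y₂) : G₁ × G₂) = Nat.lcm m₁ m₂) ∨
        (y₁ ∉ N₁ ∧ y₂ ∈ N₂ ∧ orderOf ((y₁, y₂) : G₁ × G₂) = m₁) ∨
        (y₁ ∈ N₁ ∧ y₂ ∉ N₂ ∧ orderOf ((y₁, y₂) : G₁ × G₂) = m₂) := by
      intro y₁ y₂ hy
      rw [Prod.orderOf]
      by_cases hy1 : y₁ ∈ N₁
      · have hy2 : y₂ ∉ N₂ := by tauto
        refine Or.inr (Or.inr ⟨hy1, hy2, ?_⟩)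
        simp only [hm₂ y₂ hy2]
        exact Nat.dvd_antisymm (Nat.lcm_dvd (hexp₁ y₁ hy1) dvd_rfl) (Nat.dvd_lcm_right _ _)
      · by_cases hy2 : y₂ ∈ N₂
        · refine Or.inr (Or.inl ⟨hy1, hy2, ?_⟩)
          simp only [hm₁ y₁ hy1]
          exact Nat.dvd_antisymm (Nat.lcm_dvd dvd_rfl (hexp₂ y₂ hy2)) (Nat.dvd_lcm_left _ _)
        · exact Or.inl ⟨hy1, hy2, by rw [hm₁ y₁ hy1, hm₂ y₂ hy2]⟩
    have e₁ : x₁ * n₁ ∈ N₁ ↔ x₁ ∈ N₁ :=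
      ⟨fun hc => by simpa using N₁.mul_mem hc (N₁.inv_mem hn1), fun hc => N₁.mul_mem hc hn1⟩
    have e₂ : x₂ * n₂ ∈ N₂ ↔ x₂ ∈ N₂ :=
      ⟨fun hc => by simpa using N₂.mul_mem hc (N₂.inv_mem hn2), fun hc => N₂.mul_mem hc hn2⟩
    have hx' : (x₁ * n₁ ∉ N₁ ∨ x₂ * n₂ ∉ N₂) := by
      rcases hx with h | h
      · exact Or.inl (fun hc => h (e₁.1 hc))
      · exact Or.inr (fun hc => h (e₂.1 hc))
    have hmul : ((x₁, x₂) : G₁ × G₂) * (n₁, n₂) = (x₁ * n₁, x₂ * n₂) := rfl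
    rw [hmul]
    rcases key x₁ x₂ hx with ⟨ha, hb, h⟩ | ⟨ha, hb, h⟩ | ⟨ha, hb, h⟩ <;>
      rcases key (x₁ * n₁) (x₂ * n₂) hx' with ⟨ha', hb', h'⟩ | ⟨ha', hb', h'⟩ | ⟨ha', hb', h'⟩ <;>
      rw [h, h'] <;> tauto
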